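/- Dilution achievability under CPTP_A: let ρ₀, ρ₁ be density matrices and M > 1 a real number with ρ₀ ≤ (2M−1)ρ₁ and ρ₁ ≤ (2M−1)ρ₀. Define ρ̃₀ = ((2M−1)ρ₀ − ρ₁)/(2M−2) and ρ̃₁ = ((2M−1)ρ₁ − ρ₀)/(2M−2), which are density matrices, and the channel E(ω) = ⟨0|ω|0⟩ ρ̃₀ + ⟨1|ω|1⟩ ρ̃₁ on qubit inputs. Then E(π_M) = ρ₀ and E(σ_x π_M σ_x) = ρ₁. -/

import Mathlib

open Matrix
open scoped ComplexOrder

/-- The golden-unit qubit state `π_M = (1−1/(2M))|0⟩⟨0| + (1/(2M))|1⟩⟨1|`. -/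
noncomputable def piM (M : ℝ) : Matrix (Fin 2) (Fin 2) ℂ :=
  !![((1 - 1 / (2 * M) : ℝ) : ℂ), 0; 0, ((1 / (2 * M) : ℝ) : ℂ)]

/-- The Pauli-x matrix. -/
def sigmaX : Matrix (Fin 2) (Fin 2) ℂ := !![0, 1; 1, 0]

/-- `ρ̃₀ = ((2M−1)ρ₀ − ρ₁)/(2M−2)`. -/
noncomputable def rhoTilde {d : ℕ} (M : ℝ) (ρ₀ ρ₁ : Matrix (Fin d) (Fin d) ℂ) :
    Matrix (Fin d) (Fin d) ℂ :=
  (2 * M - 2)⁻¹ • ((2 * M - 1) • ρ₀ - ρ₁)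

/-- The measure-and-prepare channel `E(ω) = ⟨0|ω|0⟩ ρ̃₀ + ⟨1|ω|1⟩ ρ̃₁` on qubit inputs. -/
noncomputable def dilutionChannel {d : ℕ} (ρt₀ ρt₁ : Matrix (Fin d) (Fin d) ℂ)
    (ω : Matrix (Fin 2) (Fin 2) ℂ) : Matrix (Fin d) (Fin d) ℂ :=
  ω 0 0 • ρt₀ + ω 1 1 • ρt₁

lemma psd_real_smul {n : ℕ} {A : Matrix (Fin n) (Fin n) ℂ} (h : A.PosSemidef)
    {r : ℝ} (hr : 0 ≤ r) : (r • A).PosSemidef := by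
  have e : (r • A) = ((r:ℂ) • A) := by ext i j; simp [Complex.real_smul]
  rw [e]
  constructor
  · simp [Matrix.IsHermitian, conjTranspose_smul, Complex.conj_ofReal, h.1.eq]
  · intro x
    exact (h.smul (by exact_mod_cast hr : (0:ℂ) ≤ (r:ℂ))).2 x

/-- Dilution achievability under `CPTP_A`: if `M > 1`, `ρ₀ ≤ (2M−1)ρ₁` and
`ρ₁ ≤ (2M−1)ρ₀`, then `ρ̃₀ = ((2M−1)ρ₀−ρ₁)/(2M−2)` and `ρ̃₁ = ((2M−1)ρ₁−ρ₀)/(2M−2)` are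
density matrices, and the channel `E(ω) = ⟨0|ω|0⟩ρ̃₀ + ⟨1|ω|1⟩ρ̃₁` satisfies
`E(π_M) = ρ₀` and `E(σ_x π_M σ_x) = ρ₁`. -/
theorem dilution_achievability {d : ℕ} (M : ℝ) (hM : 1 < M)
    (ρ₀ ρ₁ : Matrix (Fin d) (Fin d) ℂ)
    (h₀ : ρ₀.PosSemidef) (h₀t : ρ₀.trace = 1)
    (h₁ : ρ₁.PosSemidef) (h₁t : ρ₁.trace = 1)
    (hL₀ : ((2 * M - 1) • ρ₁ - ρ₀).PosSemidef)
    (hL₁ : ((2 * M - 1) • ρ₀ - ρ₁).PosSemidef) :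
    (rhoTilde M ρ₀ ρ₁).PosSemidef ∧ (rhoTilde M ρ₀ ρ₁).trace = 1 ∧
    (rhoTilde M ρ₁ ρ₀).PosSemidef ∧ (rhoTilde M ρ₁ ρ₀).trace = 1 ∧
    dilutionChannel (rhoTilde M ρ₀ ρ₁) (rhoTilde M ρ₁ ρ₀) (piM M) = ρ₀ ∧
    dilutionChannel (rhoTilde M ρ₀ ρ₁) (rhoTilde M ρ₁ ρ₀) (sigmaX * piM M * sigmaX) = ρ₁ := by
  have hinv : (0:ℝ) ≤ (2 * M - 2)⁻¹ := inv_nonneg.2 (by linarith)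
  have hne : (2 * M - 2 : ℝ) ≠ 0 := by nlinarith
  have hMne : (M : ℝ) ≠ 0 := by nlinarith
  have hneC : ((2 * M - 2 : ℝ) : ℂ) ≠ 0 := by exact_mod_cast hne
  have hMneC : ((M : ℝ) : ℂ) ≠ 0 := by exact_mod_cast hMne
  have hM1C : ((M:ℝ):ℂ) - 1 ≠ 0 := by
    intro h
    have : (M:ℝ) - 1 = 0 := by exact_mod_cast h
    linarith
  have hq : (-(((M:ℝ):ℂ) * 4) + ((M:ℝ):ℂ) ^ 2 * 4) ≠ 0 := by
    have e : (-(((M:ℝ):ℂ) * 4) + ((M:ℝ):ℂ) ^ 2 * 4) = 4 * ((M:ℝ):ℂ) * (((M:ℝ):ℂ) - 1) := by ring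
    rw [e]
    exact mul_ne_zero (mul_ne_zero (by norm_num) hMneC) hM1C
  have htr : ∀ (A B : Matrix (Fin d) (Fin d) ℂ), A.trace = 1 → B.trace = 1 →
      (rhoTilde M A B).trace = 1 := by
    intro A B hA hB
    rw [rhoTilde, trace_smul, trace_sub, trace_smul, hA, hB]
    simp only [Complex.real_smul]
    push_cast
    have h2C : (2*(M:ℝ)-2 : ℂ) ≠ 0 := by push_cast at hneC; convert hneC using 2
    rw [inv_mul_eq_div, div_eq_one_iff_eq h2C]
    ring
  refine ⟨psd_real_smul hL₁ hinv, htr _ _ h₀t h₁t, psd_real_smul hL₀ hinv, htr _ _ h₁t h₀t, ?_, ?_⟩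
  · ext i j
    simp only [dilutionChannel, rhoTilde, piM, Matrix.add_apply, Matrix.smul_apply,
      Matrix.sub_apply, Matrix.of_apply, Matrix.cons_val', Matrix.cons_val_zero, Matrix.cons_val_one,
      Matrix.head_cons, Matrix.empty_val', Matrix.cons_val_fin_one, Matrix.head_fin_const,
      smul_eq_mul, Complex.real_smul]
    push_cast
    field_simp
    ring
  · ext i j
    have h00 : (sigmaX * piM M * sigmaX) 0 0 = ((1 / (2 * M) : ℝ) : ℂ) := by
      simp [sigmaX, piM, Matrix.mul_apply, Fin.sum_univ_two]
    have h11 : (sigmaX * piM M * sigmaX) 1 1 = ((1 - 1 / (2 * M) : ℝ) : ℂ) := by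
      simp [sigmaX, piM, Matrix.mul_apply, Fin.sum_univ_two]
    simp only [dilutionChannel, rhoTilde, h00, h11, Matrix.add_apply, Matrix.smul_apply,
      Matrix.sub_apply, smul_eq_mul, Complex.real_smul]
    push_cast
    field_simp
    ring
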